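/- The operator D̂ defined by (D̂x)(s) = Dx_s maps BU into BU, is a bounded linear operator for the supremum norm, and for each r > 0 it is uniformly continuous on B_r for the compact-open topology: given ε > 0 there is δ(r) > 0 such that d(D̂x_1, D̂x_2) < ε for all x_1, x_2 ∈ B_r with d(x_1,x_2) < δ(r). -/

import Mathlib

open MeasureTheory Filter Set

/-- `x` is bounded and uniformly continuous on `(-∞,0]` (membership in `BU`,
where only the restriction of `x` to `(-∞,0]` is relevant). -/
def IsBU (m : ℕ) (x : ℝ → Fin m → ℝ) : Prop :=
  (∃ C : ℝ, ∀ s : ℝ, s ≤ 0 → ‖x s‖ ≤ C) ∧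
  ∀ ε > (0:ℝ), ∃ δ > (0:ℝ), ∀ s : ℝ, s ≤ 0 → ∀ s' : ℝ, s' ≤ 0 →
    |s - s'| < δ → ‖x s - x s'‖ < ε

/-- the supremum norm `‖x‖_∞ = sup_{s ≤ 0} ‖x(s)‖`. -/
noncomputable def supNorm (m : ℕ) (x : ℝ → Fin m → ℝ) : ℝ :=
  ⨆ s : Set.Iic (0:ℝ), ‖x (s : ℝ)‖

/-- time shift: `shift m x t = x_t`, where `x_t(s) = x(t+s)`. -/
def shift (m : ℕ) (x : ℝ → Fin m → ℝ) (t : ℝ) : ℝ → Fin m → ℝ :=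
  fun s => x (t + s)

/-- The operator `Dx = x(0) - ∫_{-∞}^0 [dν(s)] x(s)`, where the matrix of real
(signed) Borel measures `ν` is given through a positive part `νp` and a
negative part `νn` (Jordan decomposition), i.e. `ν i j = νp i j - νn i j`. -/
noncomputable def Dop (m : ℕ) (νp νn : Fin m → Fin m → Measure ℝ)
    (x : ℝ → Fin m → ℝ) : Fin m → ℝ :=
  fun i => x 0 i - ∑ j : Fin m,
    ((∫ s in Set.Iic (0:ℝ), x s j ∂(νp i j)) - ∫ s in Set.Iic (0:ℝ), x s j ∂(νn i j))

/-- the measures `ν_ij` have finite total variation and `|ν_ij|({0}) = 0`. -/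
def NuCond (m : ℕ) (νp νn : Fin m → Fin m → Measure ℝ) : Prop :=
  (∀ i j, νp i j Set.univ ≠ ⊤) ∧ (∀ i j, νn i j Set.univ ≠ ⊤) ∧
  (∀ i j, νp i j {0} = 0) ∧ (∀ i j, νn i j {0} = 0)

/-- `D` is stable: there is a continuous `c : [0,∞) → [0,∞)` with `c(t) → 0`
as `t → ∞` such that every continuous `x : ℝ → ℝ^m` with `x_0 ∈ BU` and
`D x_t = 0` for all `t ≥ 0` satisfies `‖x(t)‖ ≤ c(t) ‖x_0‖_∞` for all `t ≥ 0`. -/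
def IsStableOp (m : ℕ) (D : (ℝ → Fin m → ℝ) → Fin m → ℝ) : Prop :=
  ∃ c : ℝ → ℝ, ContinuousOn c (Set.Ici 0) ∧ (∀ t : ℝ, 0 ≤ t → 0 ≤ c t) ∧
    Filter.Tendsto c Filter.atTop (nhds 0) ∧
    ∀ x : ℝ → Fin m → ℝ, Continuous x → IsBU m x →
      (∀ t : ℝ, 0 ≤ t → D (shift m x t) = 0) →
      ∀ t : ℝ, 0 ≤ t → ‖x t‖ ≤ c t * supNorm m x

/-- the convolution operator `D̂`, `(D̂x)(s) = D x_s`. -/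
noncomputable def Dhat (m : ℕ) (νp νn : Fin m → Fin m → Measure ℝ)
    (x : ℝ → Fin m → ℝ) : ℝ → Fin m → ℝ :=
  fun s => Dop m νp νn (shift m x s)

/-- the seminorm `‖x‖_n = sup_{s ∈ [-n,0]} ‖x(s)‖`. -/
noncomputable def normOn (m : ℕ) (n : ℕ) (x : ℝ → Fin m → ℝ) : ℝ :=
  ⨆ s : Set.Icc (-(n:ℝ)) 0, ‖x (s : ℝ)‖

/-- the compact-open metric
`d(x,y) = ∑_{n ≥ 1} 2⁻ⁿ ‖x-y‖_n / (1 + ‖x-y‖_n)`. -/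
noncomputable def coDist (m : ℕ) (x y : ℝ → Fin m → ℝ) : ℝ :=
  ∑' n : ℕ, (1/2 : ℝ)^(n+1) *
    (normOn m (n+1) (fun s => x s - y s)) / (1 + normOn m (n+1) (fun s => x s - y s))

/-- `sup_{0 ≤ u ≤ t} ‖h(u)‖`. -/
noncomputable def supOn (m : ℕ) (h : ℝ → Fin m → ℝ) (t : ℝ) : ℝ :=
  ⨆ u : Set.Icc (0:ℝ) t, ‖h (u : ℝ)‖

/-- the order `x ≤_D y`, i.e. `D x_s ≤ D y_s` (componentwise) for all `s ≤ 0`. -/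
def leD (m : ℕ) (νp νn : Fin m → Fin m → Measure ℝ) (x y : ℝ → Fin m → ℝ) : Prop :=
  ∀ s : ℝ, s ≤ 0 → ∀ i, Dhat m νp νn x s i ≤ Dhat m νp νn y s i

section helpers
variable {m : ℕ}

lemma normOn_nonneg (n : ℕ) (x : ℝ → Fin m → ℝ) : 0 ≤ normOn m n x :=
  Real.iSup_nonneg fun _ => norm_nonneg _

lemma supNorm_nonneg (x : ℝ → Fin m → ℝ) : 0 ≤ supNorm m x :=
  Real.iSup_nonneg fun _ => norm_nonneg _

lemma norm_le_supNorm {x : ℝ → Fin m → ℝ} {C : ℝ} (hC : ∀ s : ℝ, s ≤ 0 → ‖x s‖ ≤ C)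
    {s : ℝ} (hs : s ≤ 0) : ‖x s‖ ≤ supNorm m x := by
  have hb : BddAbove (range fun s : Set.Iic (0:ℝ) => ‖x (s:ℝ)‖) := by
    refine ⟨C, ?_⟩; rintro _ ⟨⟨t, ht⟩, rfl⟩; exact hC t ht
  exact le_ciSup hb ⟨s, hs⟩

lemma supNorm_le {x : ℝ → Fin m → ℝ} {C : ℝ} (hC : ∀ s : ℝ, s ≤ 0 → ‖x s‖ ≤ C) :
    supNorm m x ≤ C := by
  haveI : Nonempty (Set.Iic (0:ℝ)) := ⟨⟨0, Set.mem_Iic.mpr le_rfl⟩⟩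
  exact ciSup_le fun s => hC s s.2

lemma norm_le_normOn {x : ℝ → Fin m → ℝ} {C : ℝ} (hC : ∀ s : ℝ, s ≤ 0 → ‖x s‖ ≤ C)
    {n : ℕ} {s : ℝ} (hs : s ∈ Set.Icc (-(n:ℝ)) 0) : ‖x s‖ ≤ normOn m n x := by
  have hb : BddAbove (range fun s : Set.Icc (-(n:ℝ)) (0:ℝ) => ‖x (s:ℝ)‖) := by
    refine ⟨C, ?_⟩; rintro _ ⟨⟨t, ht⟩, rfl⟩; exact hC t ht.2
  exact le_ciSup hb ⟨s, hs⟩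

lemma normOn_le {x : ℝ → Fin m → ℝ} {C : ℝ} {n : ℕ}
    (hC : ∀ s : ℝ, s ∈ Set.Icc (-(n:ℝ)) 0 → ‖x s‖ ≤ C) : normOn m n x ≤ C := by
  haveI : Nonempty (Set.Icc (-(n:ℝ)) (0:ℝ)) :=
    ⟨⟨0, ⟨neg_nonpos.mpr (Nat.cast_nonneg n), le_refl 0⟩⟩⟩
  exact ciSup_le fun s => hC s s.2

lemma IsBU.contOn {x : ℝ → Fin m → ℝ} (hx : IsBU m x) (j : Fin m) :
    ContinuousOn (fun s => x s j) (Set.Iic (0:ℝ)) := by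
  rw [Metric.continuousOn_iff]
  intro b hb ε hε
  obtain ⟨δ, hδ, huc⟩ := hx.2 ε hε
  refine ⟨δ, hδ, fun a ha hab => ?_⟩
  have h1 : |x a j - x b j| ≤ ‖x a - x b‖ := by
    simpa [Real.norm_eq_abs] using norm_le_pi_norm (x a - x b) j
  have h2 : ‖x a - x b‖ < ε := huc a ha b hb (by simpa [Real.dist_eq] using hab)
  calc dist (x a j) (x b j) = |x a j - x b j| := Real.dist_eq _ _
    _ ≤ ‖x a - x b‖ := h1
    _ < ε := h2

lemma IsBU.sub {x y : ℝ → Fin m → ℝ} (hx : IsBU m x) (hy : IsBU m y) :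
    IsBU m (fun u => x u - y u) := by
  obtain ⟨⟨Cx, hCx⟩, hux⟩ := hx
  obtain ⟨⟨Cy, hCy⟩, huy⟩ := hy
  constructor
  · exact ⟨Cx + Cy, fun s hs => (norm_sub_le _ _).trans (add_le_add (hCx s hs) (hCy s hs))⟩
  · intro ε hε
    obtain ⟨δ₁, hδ₁, h₁⟩ := hux (ε/2) (by positivity)
    obtain ⟨δ₂, hδ₂, h₂⟩ := huy (ε/2) (by positivity)
    refine ⟨min δ₁ δ₂, lt_min hδ₁ hδ₂, fun s hs s' hs' hss => ?_⟩
    have e : (x s - y s) - (x s' - y s') = (x s - x s') - (y s - y s') := by abel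
    rw [e]
    calc ‖(x s - x s') - (y s - y s')‖ ≤ ‖x s - x s'‖ + ‖y s - y s'‖ := norm_sub_le _ _
      _ < ε/2 + ε/2 := add_lt_add (h₁ s hs s' hs' (hss.trans_le (min_le_left _ _)))
          (h₂ s hs s' hs' (hss.trans_le (min_le_right _ _)))
      _ = ε := by ring

end helpers

section measureHelpers
variable {m : ℕ}

lemma isFiniteRestrict {μ : Measure ℝ} (hμ : μ Set.univ ≠ ⊤) (S : Set ℝ) :
    IsFiniteMeasure (μ.restrict S) :=
  ⟨by rw [Measure.restrict_apply_univ]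
      exact (measure_mono (Set.subset_univ _)).trans_lt (lt_top_iff_ne_top.mpr hμ)⟩

lemma integrableOn_of_bound {μ : Measure ℝ} (hμ : μ Set.univ ≠ ⊤) {f : ℝ → ℝ}
    (hc : ContinuousOn f (Set.Iic 0)) {C : ℝ} (hC : ∀ s : ℝ, s ≤ 0 → |f s| ≤ C) :
    IntegrableOn f (Set.Iic 0) μ := by
  haveI := isFiniteRestrict hμ (Set.Iic (0:ℝ))
  refine Integrable.mono' (integrable_const C)
    (hc.aestronglyMeasurable measurableSet_Iic) ?_
  rw [ae_restrict_iff' measurableSet_Iic]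
  exact ae_of_all _ fun s hs => by simpa [Real.norm_eq_abs] using hC s hs

lemma abs_setIntegral_le {μ : Measure ℝ} (hμ : μ Set.univ ≠ ⊤) {f : ℝ → ℝ} {C : ℝ}
    {S : Set ℝ} (hS : MeasurableSet S) (hC : ∀ s ∈ S, |f s| ≤ C) :
    |∫ s in S, f s ∂μ| ≤ C * (μ S).toReal := by
  haveI := isFiniteRestrict hμ S
  have h := norm_integral_le_of_norm_le_const (μ := μ.restrict S) (f := f) (C := C)
    (by rw [ae_restrict_iff' hS]
        exact ae_of_all _ fun s hs => by simpa [Real.norm_eq_abs] using hC s hs)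
  simpa [Real.norm_eq_abs, Measure.restrict_apply_univ, measureReal_def] using h

noncomputable def Ktot (m : ℕ) (νp νn : Fin m → Fin m → Measure ℝ) : ℝ :=
  ∑ i, ∑ j, (((νp i j) (Set.Iic (0:ℝ))).toReal + ((νn i j) (Set.Iic (0:ℝ))).toReal)

noncomputable def tailK (m : ℕ) (νp νn : Fin m → Fin m → Measure ℝ) (T : ℕ) : ℝ :=
  ∑ i, ∑ j, (((νp i j) (Set.Iic (-(T:ℝ)))).toReal + ((νn i j) (Set.Iic (-(T:ℝ)))).toReal)

lemma Ktot_nonneg (νp νn : Fin m → Fin m → Measure ℝ) : 0 ≤ Ktot m νp νn :=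
  Finset.sum_nonneg fun _ _ => Finset.sum_nonneg fun _ _ =>
    add_nonneg ENNReal.toReal_nonneg ENNReal.toReal_nonneg

lemma tailK_nonneg (νp νn : Fin m → Fin m → Measure ℝ) (T : ℕ) : 0 ≤ tailK m νp νn T :=
  Finset.sum_nonneg fun _ _ => Finset.sum_nonneg fun _ _ =>
    add_nonneg ENNReal.toReal_nonneg ENNReal.toReal_nonneg

lemma row_le_Ktot (νp νn : Fin m → Fin m → Measure ℝ) (i : Fin m) :
    ∑ j, (((νp i j) (Set.Iic (0:ℝ))).toReal + ((νn i j) (Set.Iic (0:ℝ))).toReal)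
      ≤ Ktot m νp νn :=
  Finset.single_le_sum (f := fun i => ∑ j,
      (((νp i j) (Set.Iic (0:ℝ))).toReal + ((νn i j) (Set.Iic (0:ℝ))).toReal))
    (fun _ _ => Finset.sum_nonneg fun _ _ =>
      add_nonneg ENNReal.toReal_nonneg ENNReal.toReal_nonneg) (Finset.mem_univ i)

lemma row_le_tailK (νp νn : Fin m → Fin m → Measure ℝ) (T : ℕ) (i : Fin m) :
    ∑ j, (((νp i j) (Set.Iic (-(T:ℝ)))).toReal + ((νn i j) (Set.Iic (-(T:ℝ)))).toReal)
      ≤ tailK m νp νn T :=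
  Finset.single_le_sum (f := fun i => ∑ j,
      (((νp i j) (Set.Iic (-(T:ℝ)))).toReal + ((νn i j) (Set.Iic (-(T:ℝ)))).toReal))
    (fun _ _ => Finset.sum_nonneg fun _ _ =>
      add_nonneg ENNReal.toReal_nonneg ENNReal.toReal_nonneg) (Finset.mem_univ i)

lemma tailK_tendsto {νp νn : Fin m → Fin m → Measure ℝ} (hν : NuCond m νp νn) :
    Tendsto (fun T : ℕ => tailK m νp νn T) atTop (nhds 0) := by
  have key : ∀ (μ : Measure ℝ), μ Set.univ ≠ ⊤ →
      Tendsto (fun T : ℕ => (μ (Set.Iic (-(T:ℝ)))).toReal) atTop (nhds 0) := by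
    intro μ hμ
    have hanti : Antitone (fun T : ℕ => Set.Iic (-(T:ℝ))) := by
      intro a b hab
      exact Set.Iic_subset_Iic.mpr (neg_le_neg (Nat.cast_le.mpr hab))
    have hint : ⋂ T : ℕ, Set.Iic (-(T:ℝ)) = ∅ := by
      ext y
      simp only [Set.mem_iInter, Set.mem_Iic, Set.mem_empty_iff_false, iff_false, not_forall]
      obtain ⟨T, hT⟩ := exists_nat_gt (-y)
      exact ⟨T, by push_neg; linarith⟩
    have h1 : Tendsto (fun T : ℕ => μ (Set.Iic (-(T:ℝ)))) atTop (nhds 0) := by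
      have := MeasureTheory.tendsto_measure_iInter_atTop
        (μ := μ) (s := fun T : ℕ => Set.Iic (-(T:ℝ)))
        (fun T => measurableSet_Iic.nullMeasurableSet) hanti
        ⟨0, ((measure_mono (Set.subset_univ _)).trans_lt (lt_top_iff_ne_top.mpr hμ)).ne⟩
      rwa [hint, measure_empty] at this
    have h2 := (ENNReal.tendsto_toReal ENNReal.zero_ne_top).comp h1
    simpa [Function.comp_def] using h2
  have : Tendsto (fun T : ℕ => tailK m νp νn T) atTop
      (nhds (∑ i : Fin m, ∑ j : Fin m, ((0:ℝ) + 0))) := by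
    apply tendsto_finset_sum
    intro i _
    apply tendsto_finset_sum
    intro j _
    exact (key _ (hν.1 i j)).add (key _ (hν.2.1 i j))
  simpa using this

end measureHelpers

section dopHelpers
variable {m : ℕ} {νp νn : Fin m → Fin m → Measure ℝ}

lemma integrable_shift (hν : NuCond m νp νn) {x : ℝ → Fin m → ℝ} (hx : IsBU m x)
    {s : ℝ} (hs : s ≤ 0) (i j : Fin m) :
    IntegrableOn (fun u => shift m x s u j) (Set.Iic 0) (νp i j) ∧
    IntegrableOn (fun u => shift m x s u j) (Set.Iic 0) (νn i j) := by
  obtain ⟨C, hC⟩ := hx.1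
  have hcont : ContinuousOn (fun u => x (s + u) j) (Set.Iic (0:ℝ)) := by
    apply (hx.contOn j).comp (Continuous.continuousOn (by continuity))
    intro u hu
    simp only [Set.mem_Iic] at hu ⊢
    linarith
  have hbd : ∀ u : ℝ, u ≤ 0 → |x (s + u) j| ≤ C := by
    intro u hu
    have h1 : |x (s+u) j| ≤ ‖x (s+u)‖ := by
      simpa [Real.norm_eq_abs] using norm_le_pi_norm (x (s+u)) j
    exact h1.trans (hC _ (by linarith))
  exact ⟨integrableOn_of_bound (hν.1 i j) hcont hbd,
    integrableOn_of_bound (hν.2.1 i j) hcont hbd⟩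

lemma Dop_abs_le (hν : NuCond m νp νn) {g : ℝ → Fin m → ℝ} {C : ℝ} (hC0 : 0 ≤ C)
    (hg : ∀ u : ℝ, u ≤ 0 → ‖g u‖ ≤ C) (i : Fin m) :
    |Dop m νp νn g i| ≤ C * (1 + Ktot m νp νn) := by
  have hcomp : ∀ u : ℝ, u ≤ 0 → ∀ j, |g u j| ≤ C := fun u hu j =>
    (by simpa [Real.norm_eq_abs] using norm_le_pi_norm (g u) j : |g u j| ≤ ‖g u‖).trans
      (hg u hu)
  have hints : ∀ j, |(∫ u in Set.Iic (0:ℝ), g u j ∂(νp i j))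
      - ∫ u in Set.Iic (0:ℝ), g u j ∂(νn i j)|
      ≤ C * (((νp i j) (Set.Iic (0:ℝ))).toReal + ((νn i j) (Set.Iic (0:ℝ))).toReal) := by
    intro j
    have h1 := abs_setIntegral_le (hν.1 i j) measurableSet_Iic
      (fun s hs => hcomp s hs j)
    have h2 := abs_setIntegral_le (hν.2.1 i j) measurableSet_Iic
      (fun s hs => hcomp s hs j)
    calc |(∫ u in Set.Iic (0:ℝ), g u j ∂(νp i j)) - ∫ u in Set.Iic (0:ℝ), g u j ∂(νn i j)|
        ≤ |∫ u in Set.Iic (0:ℝ), g u j ∂(νp i j)| + |∫ u in Set.Iic (0:ℝ), g u j ∂(νn i j)| :=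
          abs_sub _ _
      _ ≤ C * ((νp i j) (Set.Iic (0:ℝ))).toReal + C * ((νn i j) (Set.Iic (0:ℝ))).toReal :=
          add_le_add h1 h2
      _ = C * (((νp i j) (Set.Iic (0:ℝ))).toReal + ((νn i j) (Set.Iic (0:ℝ))).toReal) := by
          ring
  have hsum : |∑ j, ((∫ u in Set.Iic (0:ℝ), g u j ∂(νp i j))
      - ∫ u in Set.Iic (0:ℝ), g u j ∂(νn i j))| ≤ C * Ktot m νp νn := by
    calc |∑ j, ((∫ u in Set.Iic (0:ℝ), g u j ∂(νp i j))
          - ∫ u in Set.Iic (0:ℝ), g u j ∂(νn i j))|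
        ≤ ∑ j, |(∫ u in Set.Iic (0:ℝ), g u j ∂(νp i j))
          - ∫ u in Set.Iic (0:ℝ), g u j ∂(νn i j)| := Finset.abs_sum_le_sum_abs _ _
      _ ≤ ∑ j, C * (((νp i j) (Set.Iic (0:ℝ))).toReal + ((νn i j) (Set.Iic (0:ℝ))).toReal) :=
          Finset.sum_le_sum fun j _ => hints j
      _ = C * ∑ j, (((νp i j) (Set.Iic (0:ℝ))).toReal + ((νn i j) (Set.Iic (0:ℝ))).toReal) :=
          (Finset.mul_sum _ _ _).symm
      _ ≤ C * Ktot m νp νn := by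
          exact mul_le_mul_of_nonneg_left (row_le_Ktot νp νn i) hC0
  calc |Dop m νp νn g i| ≤ |g 0 i| + |∑ j, ((∫ u in Set.Iic (0:ℝ), g u j ∂(νp i j))
        - ∫ u in Set.Iic (0:ℝ), g u j ∂(νn i j))| := abs_sub _ _
    _ ≤ C + C * Ktot m νp νn := add_le_add (hcomp 0 le_rfl i) hsum
    _ = C * (1 + Ktot m νp νn) := by ring

end dopHelpers

section dopHelpers2
variable {m : ℕ} {νp νn : Fin m → Fin m → Measure ℝ}

lemma Dop_sub {g g' : ℝ → Fin m → ℝ}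
    (hg : ∀ i j, IntegrableOn (fun u => g u j) (Set.Iic 0) (νp i j) ∧
      IntegrableOn (fun u => g u j) (Set.Iic 0) (νn i j))
    (hg' : ∀ i j, IntegrableOn (fun u => g' u j) (Set.Iic 0) (νp i j) ∧
      IntegrableOn (fun u => g' u j) (Set.Iic 0) (νn i j)) (i : Fin m) :
    Dop m νp νn (fun u => g u - g' u) i = Dop m νp νn g i - Dop m νp νn g' i := by
  unfold Dop
  simp only [Pi.sub_apply]
  have hp : ∀ j, (∫ u in Set.Iic (0:ℝ), (g u j - g' u j) ∂(νp i j))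
      = (∫ u in Set.Iic (0:ℝ), g u j ∂(νp i j)) - ∫ u in Set.Iic (0:ℝ), g' u j ∂(νp i j) :=
    fun j => integral_sub (hg i j).1 (hg' i j).1
  have hn : ∀ j, (∫ u in Set.Iic (0:ℝ), (g u j - g' u j) ∂(νn i j))
      = (∫ u in Set.Iic (0:ℝ), g u j ∂(νn i j)) - ∫ u in Set.Iic (0:ℝ), g' u j ∂(νn i j) :=
    fun j => integral_sub (hg i j).2 (hg' i j).2
  rw [Finset.sum_congr rfl fun j _ => by rw [hp j, hn j]]
  rw [show ∑ j, ((∫ u in Set.Iic (0:ℝ), g u j ∂(νp i j))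
        - (∫ u in Set.Iic (0:ℝ), g' u j ∂(νp i j))
        - ((∫ u in Set.Iic (0:ℝ), g u j ∂(νn i j))
        - ∫ u in Set.Iic (0:ℝ), g' u j ∂(νn i j)))
      = ∑ j, ((∫ u in Set.Iic (0:ℝ), g u j ∂(νp i j))
        - (∫ u in Set.Iic (0:ℝ), g u j ∂(νn i j)))
        - ∑ j, ((∫ u in Set.Iic (0:ℝ), g' u j ∂(νp i j))
        - (∫ u in Set.Iic (0:ℝ), g' u j ∂(νn i j))) from by
    rw [← Finset.sum_sub_distrib]
    exact Finset.sum_congr rfl fun j _ => by ring]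
  ring

lemma Dop_add {g g' : ℝ → Fin m → ℝ}
    (hg : ∀ i j, IntegrableOn (fun u => g u j) (Set.Iic 0) (νp i j) ∧
      IntegrableOn (fun u => g u j) (Set.Iic 0) (νn i j))
    (hg' : ∀ i j, IntegrableOn (fun u => g' u j) (Set.Iic 0) (νp i j) ∧
      IntegrableOn (fun u => g' u j) (Set.Iic 0) (νn i j)) (i : Fin m) :
    Dop m νp νn (fun u => g u + g' u) i = Dop m νp νn g i + Dop m νp νn g' i := by
  unfold Dop
  simp only [Pi.add_apply]
  have hp : ∀ j, (∫ u in Set.Iic (0:ℝ), (g u j + g' u j) ∂(νp i j))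
      = (∫ u in Set.Iic (0:ℝ), g u j ∂(νp i j)) + ∫ u in Set.Iic (0:ℝ), g' u j ∂(νp i j) :=
    fun j => integral_add (hg i j).1 (hg' i j).1
  have hn : ∀ j, (∫ u in Set.Iic (0:ℝ), (g u j + g' u j) ∂(νn i j))
      = (∫ u in Set.Iic (0:ℝ), g u j ∂(νn i j)) + ∫ u in Set.Iic (0:ℝ), g' u j ∂(νn i j) :=
    fun j => integral_add (hg i j).2 (hg' i j).2
  rw [Finset.sum_congr rfl fun j _ => by rw [hp j, hn j]]
  rw [show ∑ j, ((∫ u in Set.Iic (0:ℝ), g u j ∂(νp i j))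
        + (∫ u in Set.Iic (0:ℝ), g' u j ∂(νp i j))
        - ((∫ u in Set.Iic (0:ℝ), g u j ∂(νn i j))
        + ∫ u in Set.Iic (0:ℝ), g' u j ∂(νn i j)))
      = ∑ j, ((∫ u in Set.Iic (0:ℝ), g u j ∂(νp i j))
        - (∫ u in Set.Iic (0:ℝ), g u j ∂(νn i j)))
        + ∑ j, ((∫ u in Set.Iic (0:ℝ), g' u j ∂(νp i j))
        - (∫ u in Set.Iic (0:ℝ), g' u j ∂(νn i j))) from by
    rw [← Finset.sum_add_distrib]
    exact Finset.sum_congr rfl fun j _ => by ring]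
  ring

lemma Dop_smul (c : ℝ) (g : ℝ → Fin m → ℝ) (i : Fin m) :
    Dop m νp νn (fun u => c • g u) i = c * Dop m νp νn g i := by
  unfold Dop
  simp only [Pi.smul_apply, smul_eq_mul]
  have hp : ∀ (μ : Measure ℝ) j, (∫ u in Set.Iic (0:ℝ), c * g u j ∂μ)
      = c * ∫ u in Set.Iic (0:ℝ), g u j ∂μ := by
    intro μ j
    simpa [smul_eq_mul] using integral_smul (μ := μ.restrict (Set.Iic 0)) c (fun u => g u j)
  rw [Finset.sum_congr rfl fun j _ => by rw [hp (νp i j) j, hp (νn i j) j]]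
  rw [show ∑ j, (c * (∫ u in Set.Iic (0:ℝ), g u j ∂(νp i j))
        - c * ∫ u in Set.Iic (0:ℝ), g u j ∂(νn i j))
      = c * ∑ j, ((∫ u in Set.Iic (0:ℝ), g u j ∂(νp i j))
        - ∫ u in Set.Iic (0:ℝ), g u j ∂(νn i j)) from by
    rw [Finset.mul_sum]
    exact Finset.sum_congr rfl fun j _ => by ring]
  ring

end dopHelpers2

section splitHelper
variable {m : ℕ} {νp νn : Fin m → Fin m → Measure ℝ}

lemma Dop_abs_le_split (hν : NuCond m νp νn) {g : ℝ → Fin m → ℝ} {A R : ℝ}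
    (hA0 : 0 ≤ A) (hR0 : 0 ≤ R) (T : ℕ)
    (hgA : ∀ u : ℝ, -(T:ℝ) ≤ u → u ≤ 0 → ‖g u‖ ≤ A)
    (hgR : ∀ u : ℝ, u ≤ 0 → ‖g u‖ ≤ R)
    (hint : ∀ i j, IntegrableOn (fun u => g u j) (Set.Iic 0) (νp i j) ∧
      IntegrableOn (fun u => g u j) (Set.Iic 0) (νn i j)) (i : Fin m) :
    |Dop m νp νn g i| ≤ A * (1 + Ktot m νp νn) + R * tailK m νp νn T := by
  have hT0 : -(T:ℝ) ≤ 0 := neg_nonpos.mpr (Nat.cast_nonneg T)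
  have hcompA : ∀ u : ℝ, -(T:ℝ) ≤ u → u ≤ 0 → ∀ j, |g u j| ≤ A := fun u hu1 hu2 j =>
    (by simpa [Real.norm_eq_abs] using norm_le_pi_norm (g u) j : |g u j| ≤ ‖g u‖).trans
      (hgA u hu1 hu2)
  have hcompR : ∀ u : ℝ, u ≤ 0 → ∀ j, |g u j| ≤ R := fun u hu j =>
    (by simpa [Real.norm_eq_abs] using norm_le_pi_norm (g u) j : |g u j| ≤ ‖g u‖).trans
      (hgR u hu)
  -- bound for a single integral
  have key : ∀ (μ : Measure ℝ), μ Set.univ ≠ ⊤ → ∀ j,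
      IntegrableOn (fun u => g u j) (Set.Iic 0) μ →
      |∫ u in Set.Iic (0:ℝ), g u j ∂μ|
        ≤ A * (μ (Set.Iic (0:ℝ))).toReal + R * (μ (Set.Iic (-(T:ℝ)))).toReal := by
    intro μ hμ j hi
    have hsplit : (∫ u in Set.Iic (0:ℝ), g u j ∂μ)
        = (∫ u in Set.Iic (-(T:ℝ)), g u j ∂μ) + ∫ u in Set.Ioc (-(T:ℝ)) 0, g u j ∂μ := by
      rw [← setIntegral_union (Set.Iic_disjoint_Ioc le_rfl) measurableSet_Ioc
        (hi.mono_set (Set.Iic_subset_Iic.mpr hT0))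
        (hi.mono_set Set.Ioc_subset_Iic_self),
        Set.Iic_union_Ioc_eq_Iic hT0]
    have h1 : |∫ u in Set.Iic (-(T:ℝ)), g u j ∂μ| ≤ R * (μ (Set.Iic (-(T:ℝ)))).toReal :=
      abs_setIntegral_le hμ measurableSet_Iic
        (fun u hu => hcompR u (le_trans hu hT0) j)
    have h2 : |∫ u in Set.Ioc (-(T:ℝ)) 0, g u j ∂μ| ≤ A * (μ (Set.Ioc (-(T:ℝ)) 0)).toReal :=
      abs_setIntegral_le hμ measurableSet_Ioc
        (fun u hu => hcompA u (le_of_lt hu.1) hu.2 j)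
    have h3 : (μ (Set.Ioc (-(T:ℝ)) 0)).toReal ≤ (μ (Set.Iic (0:ℝ))).toReal := by
      apply ENNReal.toReal_mono
      · exact ((measure_mono (Set.subset_univ _)).trans_lt (lt_top_iff_ne_top.mpr hμ)).ne
      · exact measure_mono Set.Ioc_subset_Iic_self
    calc |∫ u in Set.Iic (0:ℝ), g u j ∂μ|
        ≤ |∫ u in Set.Iic (-(T:ℝ)), g u j ∂μ| + |∫ u in Set.Ioc (-(T:ℝ)) 0, g u j ∂μ| := by
          rw [hsplit]; exact abs_add_le _ _
      _ ≤ R * (μ (Set.Iic (-(T:ℝ)))).toReal + A * (μ (Set.Ioc (-(T:ℝ)) 0)).toReal :=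
          add_le_add h1 h2
      _ ≤ A * (μ (Set.Iic (0:ℝ))).toReal + R * (μ (Set.Iic (-(T:ℝ)))).toReal := by
          have := mul_le_mul_of_nonneg_left h3 hA0
          linarith
  have hsum : |∑ j, ((∫ u in Set.Iic (0:ℝ), g u j ∂(νp i j))
      - ∫ u in Set.Iic (0:ℝ), g u j ∂(νn i j))|
      ≤ A * Ktot m νp νn + R * tailK m νp νn T := by
    have step : ∀ j : Fin m, |(∫ u in Set.Iic (0:ℝ), g u j ∂(νp i j))
        - ∫ u in Set.Iic (0:ℝ), g u j ∂(νn i j)|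
        ≤ A * (((νp i j) (Set.Iic (0:ℝ))).toReal + ((νn i j) (Set.Iic (0:ℝ))).toReal)
          + R * (((νp i j) (Set.Iic (-(T:ℝ)))).toReal
            + ((νn i j) (Set.Iic (-(T:ℝ)))).toReal) := by
      intro j
      have h1 := key (νp i j) (hν.1 i j) j (hint i j).1
      have h2 := key (νn i j) (hν.2.1 i j) j (hint i j).2
      calc |(∫ u in Set.Iic (0:ℝ), g u j ∂(νp i j))
            - ∫ u in Set.Iic (0:ℝ), g u j ∂(νn i j)|
          ≤ |∫ u in Set.Iic (0:ℝ), g u j ∂(νp i j)|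
            + |∫ u in Set.Iic (0:ℝ), g u j ∂(νn i j)| := abs_sub _ _
        _ ≤ _ := by linarith
    calc |∑ j, ((∫ u in Set.Iic (0:ℝ), g u j ∂(νp i j))
          - ∫ u in Set.Iic (0:ℝ), g u j ∂(νn i j))|
        ≤ ∑ j, |(∫ u in Set.Iic (0:ℝ), g u j ∂(νp i j))
          - ∫ u in Set.Iic (0:ℝ), g u j ∂(νn i j)| := Finset.abs_sum_le_sum_abs _ _
      _ ≤ ∑ j, (A * (((νp i j) (Set.Iic (0:ℝ))).toReal + ((νn i j) (Set.Iic (0:ℝ))).toReal)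
          + R * (((νp i j) (Set.Iic (-(T:ℝ)))).toReal
            + ((νn i j) (Set.Iic (-(T:ℝ)))).toReal)) := Finset.sum_le_sum fun j _ => step j
      _ = A * (∑ j, (((νp i j) (Set.Iic (0:ℝ))).toReal + ((νn i j) (Set.Iic (0:ℝ))).toReal))
          + R * (∑ j, (((νp i j) (Set.Iic (-(T:ℝ)))).toReal
            + ((νn i j) (Set.Iic (-(T:ℝ)))).toReal)) := by
          rw [Finset.sum_add_distrib, Finset.mul_sum, Finset.mul_sum]
      _ ≤ A * Ktot m νp νn + R * tailK m νp νn T :=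
          add_le_add (mul_le_mul_of_nonneg_left (row_le_Ktot νp νn i) hA0)
            (mul_le_mul_of_nonneg_left (row_le_tailK νp νn T i) hR0)
  calc |Dop m νp νn g i| ≤ |g 0 i| + |∑ j, ((∫ u in Set.Iic (0:ℝ), g u j ∂(νp i j))
        - ∫ u in Set.Iic (0:ℝ), g u j ∂(νn i j))| := abs_sub _ _
    _ ≤ A + (A * Ktot m νp νn + R * tailK m νp νn T) :=
        add_le_add (hcompA 0 hT0 le_rfl i) hsum
    _ = A * (1 + Ktot m νp νn) + R * tailK m νp νn T := by ring

end splitHelper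

section dhatHelpers
variable {m : ℕ} {νp νn : Fin m → Fin m → Measure ℝ}

lemma Dhat_norm_le (hν : NuCond m νp νn) {x : ℝ → Fin m → ℝ} {C : ℝ} (hC0 : 0 ≤ C)
    (hC : ∀ u : ℝ, u ≤ 0 → ‖x u‖ ≤ C) {s : ℝ} (hs : s ≤ 0) :
    ‖Dhat m νp νn x s‖ ≤ C * (1 + Ktot m νp νn) := by
  rw [pi_norm_le_iff_of_nonneg (mul_nonneg hC0 (by linarith [Ktot_nonneg νp νn]))]
  intro i
  rw [Real.norm_eq_abs]
  exact Dop_abs_le hν hC0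
    (fun u hu => by
      show ‖x (s + u)‖ ≤ C
      exact hC _ (by linarith)) i

lemma Dhat_diff_norm_le (hν : NuCond m νp νn) {x : ℝ → Fin m → ℝ} (hx : IsBU m x)
    {s s' : ℝ} (hs : s ≤ 0) (hs' : s' ≤ 0) {η : ℝ} (hη0 : 0 ≤ η)
    (hd : ∀ u : ℝ, u ≤ 0 → ‖x (s + u) - x (s' + u)‖ ≤ η) :
    ‖Dhat m νp νn x s - Dhat m νp νn x s'‖ ≤ η * (1 + Ktot m νp νn) := by
  rw [pi_norm_le_iff_of_nonneg (mul_nonneg hη0 (by linarith [Ktot_nonneg νp νn]))]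
  intro i
  have heq : Dhat m νp νn x s i - Dhat m νp νn x s' i
      = Dop m νp νn (fun u => shift m x s u - shift m x s' u) i :=
    (Dop_sub (integrable_shift hν hx hs) (integrable_shift hν hx hs') i).symm
  rw [Pi.sub_apply, heq, Real.norm_eq_abs]
  exact Dop_abs_le hν hη0 (fun u hu => hd u hu) i

lemma Dhat_sub_apply (hν : NuCond m νp νn) {x y : ℝ → Fin m → ℝ}
    (hx : IsBU m x) (hy : IsBU m y) {s : ℝ} (hs : s ≤ 0) :
    Dhat m νp νn x s - Dhat m νp νn y s = Dhat m νp νn (fun u => x u - y u) s := by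
  funext i
  rw [Pi.sub_apply]
  exact (Dop_sub (integrable_shift hν hx hs) (integrable_shift hν hy hs) i).symm

end dhatHelpers

section seriesHelpers

lemma summable_halfpow : Summable (fun n : ℕ => (1/2:ℝ)^(n+1)) := by
  have h : Summable (fun n : ℕ => (1/2:ℝ)^n * (1/2)) :=
    Summable.mul_right _ (summable_geometric_of_lt_one (by norm_num) (by norm_num))
  simpa [pow_succ] using h

lemma coterm_nonneg {a : ℝ} (ha : 0 ≤ a) (c : ℝ) (hc : 0 ≤ c) : 0 ≤ c * a / (1 + a) :=
  div_nonneg (mul_nonneg hc ha) (by linarith)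

lemma coterm_le_pow {a : ℝ} (ha : 0 ≤ a) (n : ℕ) :
    (1/2:ℝ)^(n+1) * a / (1 + a) ≤ (1/2:ℝ)^(n+1) := by
  rw [div_le_iff₀ (by linarith)]
  have : (0:ℝ) ≤ (1/2:ℝ)^(n+1) := by positivity
  nlinarith

lemma coterm_le_self {a : ℝ} (ha : 0 ≤ a) (n : ℕ) :
    (1/2:ℝ)^(n+1) * a / (1 + a) ≤ a := by
  rw [div_le_iff₀ (by linarith)]
  have h1 : (1/2:ℝ)^(n+1) ≤ 1 := by
    apply pow_le_one₀ <;> norm_num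
  nlinarith

lemma summable_coterm (a : ℕ → ℝ) (ha : ∀ n, 0 ≤ a n) :
    Summable (fun n => (1/2:ℝ)^(n+1) * a n / (1 + a n)) :=
  Summable.of_nonneg_of_le (fun n => coterm_nonneg (ha n) _ (by positivity))
    (fun n => coterm_le_pow (ha n) n) summable_halfpow

lemma frac_lt_frac {a α : ℝ} (ha : 0 ≤ a) (hα : 0 < α)
    (h : a / (1 + a) < α / (1 + α)) : a < α := by
  rw [div_lt_div_iff₀ (by linarith) (by linarith)] at h
  nlinarith

lemma tsum_halfpow_shift (N : ℕ) : ∑' n : ℕ, (1/2:ℝ)^(n + N + 1) = (1/2:ℝ)^N := by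
  have h : (fun n : ℕ => (1/2:ℝ)^(n + N + 1)) = fun n : ℕ => (1/2:ℝ)^n * (1/2)^(N+1) := by
    funext n
    rw [add_assoc, pow_add]
  rw [h, tsum_mul_right, tsum_geometric_of_lt_one (by norm_num) (by norm_num), pow_succ]
  norm_num
  ring

end seriesHelpers


/-- The operator `D̂`, `(D̂x)(s) = D x_s`, maps `BU` into `BU`,
is linear and bounded for the supremum norm, and is uniformly continuous on
each ball `B_r` for the compact-open metric. -/
theorem statement6 (m : ℕ) (νp νn : Fin m → Fin m → Measure ℝ)
    (hν : NuCond m νp νn) :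
    -- `D̂` maps `BU` into `BU`
    (∀ x : ℝ → Fin m → ℝ, IsBU m x → IsBU m (Dhat m νp νn x)) ∧
    -- `D̂` is linear
    (∀ x y : ℝ → Fin m → ℝ, IsBU m x → IsBU m y → ∀ s : ℝ, s ≤ 0 →
      Dhat m νp νn (x + y) s = Dhat m νp νn x s + Dhat m νp νn y s) ∧
    (∀ (c : ℝ) (x : ℝ → Fin m → ℝ), IsBU m x → ∀ s : ℝ, s ≤ 0 →
      Dhat m νp νn (c • x) s = c • Dhat m νp νn x s) ∧
    -- `D̂` is bounded for the supremum norm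
    (∃ C : ℝ, ∀ x : ℝ → Fin m → ℝ, IsBU m x →
      supNorm m (Dhat m νp νn x) ≤ C * supNorm m x) ∧
    -- `D̂` is uniformly continuous on each `B_r` for the compact-open metric
    (∀ r > (0:ℝ), ∀ ε > (0:ℝ), ∃ δ > (0:ℝ),
      ∀ x₁ x₂ : ℝ → Fin m → ℝ, IsBU m x₁ → IsBU m x₂ →
        supNorm m x₁ ≤ r → supNorm m x₂ ≤ r → coDist m x₁ x₂ < δ →
        coDist m (Dhat m νp νn x₁) (Dhat m νp νn x₂) < ε) := by
  have hK0 : 0 ≤ Ktot m νp νn := Ktot_nonneg νp νn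
  have h1K : (0:ℝ) < 1 + Ktot m νp νn := by linarith
  refine ⟨?_, ?_, ?_, ?_, ?_⟩
  · -- part 1 : maps BU into BU
    intro x hx
    obtain ⟨C, hC⟩ := hx.1
    have hb : ∀ u : ℝ, u ≤ 0 → ‖x u‖ ≤ supNorm m x := fun u hu => norm_le_supNorm hC hu
    constructor
    · exact ⟨supNorm m x * (1 + Ktot m νp νn), fun s hs =>
        Dhat_norm_le hν (supNorm_nonneg x) hb hs⟩
    · intro ε hε
      have hne : (1 + Ktot m νp νn) ≠ 0 := ne_of_gt h1K
      obtain ⟨δ, hδ, huc⟩ := hx.2 (ε / (2 * (1 + Ktot m νp νn))) (by positivity)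
      refine ⟨δ, hδ, fun s hs s' hs' hss => ?_⟩
      have hder : ∀ u : ℝ, u ≤ 0 →
          ‖x (s + u) - x (s' + u)‖ ≤ ε / (2 * (1 + Ktot m νp νn)) := by
        intro u hu
        exact le_of_lt (huc (s + u) (by linarith) (s' + u) (by linarith)
          (by rw [show s + u - (s' + u) = s - s' by ring]; exact hss))
      calc ‖Dhat m νp νn x s - Dhat m νp νn x s'‖
          ≤ ε / (2 * (1 + Ktot m νp νn)) * (1 + Ktot m νp νn) :=
            Dhat_diff_norm_le hν hx hs hs' (by positivity) hder
        _ = ε / 2 := by field_simp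
        _ < ε := by linarith
  · -- part 2 : additivity
    intro x y hx hy s hs
    funext i
    rw [Pi.add_apply]
    exact Dop_add (integrable_shift hν hx hs) (integrable_shift hν hy hs) i
  · -- part 3 : homogeneity
    intro c x hx s hs
    funext i
    rw [Pi.smul_apply, smul_eq_mul]
    exact Dop_smul c (shift m x s) i
  · -- part 4 : boundedness
    refine ⟨1 + Ktot m νp νn, fun x hx => ?_⟩
    obtain ⟨C, hC⟩ := hx.1
    have hb : ∀ u : ℝ, u ≤ 0 → ‖x u‖ ≤ supNorm m x := fun u hu => norm_le_supNorm hC hu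
    exact supNorm_le fun s hs => by
      rw [mul_comm]
      exact Dhat_norm_le hν (supNorm_nonneg x) hb hs
  · -- part 5 : uniform continuity on balls for the compact-open metric
    intro r hr ε hε
    obtain ⟨N, hN⟩ : ∃ N : ℕ, (1/2:ℝ)^N < ε/2 :=
      exists_pow_lt_of_lt_one (by positivity) (by norm_num)
    set η := ε / (2 * ((N:ℝ) + 1)) with hηdef
    have hη : 0 < η := by positivity
    obtain ⟨T, hT⟩ := ((tendsto_order.1 (tailK_tendsto hν)).2 (η / (4 * r))
      (by positivity)).exists
    set M := N + T + 1 with hMdef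
    have hMcast : (M:ℝ) = (N:ℝ) + (T:ℝ) + 1 := by rw [hMdef]; push_cast; ring
    set α := η / (2 * (1 + Ktot m νp νn)) with hαdef
    have hα : 0 < α := by positivity
    refine ⟨(1/2:ℝ)^M * (α / (1 + α)), by positivity, ?_⟩
    intro x₁ x₂ hx₁ hx₂ hr₁ hr₂ hd
    set h := fun u : ℝ => x₁ u - x₂ u with hhdef
    have hhBU : IsBU m h := hx₁.sub hx₂
    obtain ⟨C₁, hC₁⟩ := hx₁.1
    obtain ⟨C₂, hC₂⟩ := hx₂.1
    have hb1 : ∀ u : ℝ, u ≤ 0 → ‖x₁ u‖ ≤ r := fun u hu => (norm_le_supNorm hC₁ hu).trans hr₁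
    have hb2 : ∀ u : ℝ, u ≤ 0 → ‖x₂ u‖ ≤ r := fun u hu => (norm_le_supNorm hC₂ hu).trans hr₂
    have hbh : ∀ u : ℝ, u ≤ 0 → ‖h u‖ ≤ 2 * r := by
      intro u hu
      calc ‖x₁ u - x₂ u‖ ≤ ‖x₁ u‖ + ‖x₂ u‖ := norm_sub_le _ _
        _ ≤ 2 * r := by linarith [hb1 u hu, hb2 u hu]
    -- step 1 : normOn M h < α
    have hstep1 : normOn m M h < α := by
      have ha0 : 0 ≤ normOn m M h := normOn_nonneg _ _
      have hterm : (1/2:ℝ)^((N+T)+1) * normOn m ((N+T)+1) (fun s => x₁ s - x₂ s) /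
          (1 + normOn m ((N+T)+1) (fun s => x₁ s - x₂ s)) ≤ coDist m x₁ x₂ :=
        Summable.le_tsum (f := fun n : ℕ => (1/2:ℝ)^(n+1) * normOn m (n+1) (fun s => x₁ s - x₂ s)
            / (1 + normOn m (n+1) (fun s => x₁ s - x₂ s)))
          (summable_coterm _ fun n => normOn_nonneg _ _) (N+T)
          (fun n _ => coterm_nonneg (normOn_nonneg _ _) _ (by positivity))
      have hlt : (1/2:ℝ)^M * normOn m M h / (1 + normOn m M h)
          < (1/2:ℝ)^M * (α / (1 + α)) := lt_of_le_of_lt hterm hd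
      rw [mul_div_assoc] at hlt
      exact frac_lt_frac ha0 hα (lt_of_mul_lt_mul_left hlt (by positivity))
    -- step 2 : pointwise bound for s in [-N, 0]
    have hpt : ∀ s : ℝ, s ∈ Set.Icc (-(N:ℝ)) 0 → ‖Dhat m νp νn h s‖ < η := by
      intro s hs
      have hsle : s ≤ 0 := hs.2
      have key : ‖Dhat m νp νn h s‖
          ≤ normOn m M h * (1 + Ktot m νp νn) + (2 * r) * tailK m νp νn T := by
        rw [pi_norm_le_iff_of_nonneg (add_nonneg (mul_nonneg (normOn_nonneg _ _) h1K.le)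
          (mul_nonneg (by linarith) (tailK_nonneg νp νn T)))]
        intro i
        rw [Real.norm_eq_abs]
        refine Dop_abs_le_split hν (normOn_nonneg _ _) (by linarith) T ?_ ?_
          (integrable_shift hν hhBU hsle) i
        · intro u hu1 hu2
          show ‖h (s + u)‖ ≤ normOn m M h
          refine norm_le_normOn hbh ⟨?_, by linarith⟩
          rw [hMcast]
          linarith [hs.1]
        · intro u hu
          show ‖h (s + u)‖ ≤ 2 * r
          exact hbh _ (by linarith)
      have e1 : α * (1 + Ktot m νp νn) = η / 2 := by
        rw [hαdef]; field_simp
      have e2 : (2 * r) * (η / (4 * r)) = η / 2 := by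
        field_simp; ring
      have hlt2 : normOn m M h * (1 + Ktot m νp νn) + (2 * r) * tailK m νp νn T
          < α * (1 + Ktot m νp νn) + (2 * r) * (η / (4 * r)) :=
        add_lt_add_of_lt_of_le (mul_lt_mul_of_pos_right hstep1 h1K)
          (mul_le_mul_of_nonneg_left hT.le (by linarith))
      calc ‖Dhat m νp νn h s‖
          ≤ normOn m M h * (1 + Ktot m νp νn) + (2 * r) * tailK m νp νn T := key
        _ < α * (1 + Ktot m νp νn) + (2 * r) * (η / (4 * r)) := hlt2
        _ = η := by rw [e1, e2]; ring
    -- step 3 : termwise bound for n < N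
    have hcd0 : coDist m (Dhat m νp νn x₁) (Dhat m νp νn x₂)
        = ∑' n : ℕ, (1/2:ℝ)^(n+1)
          * normOn m (n+1) (fun s => Dhat m νp νn x₁ s - Dhat m νp νn x₂ s)
          / (1 + normOn m (n+1) (fun s => Dhat m νp νn x₁ s - Dhat m νp νn x₂ s)) := rfl
    set f := fun n : ℕ => (1/2:ℝ)^(n+1)
      * normOn m (n+1) (fun s => Dhat m νp νn x₁ s - Dhat m νp νn x₂ s)
      / (1 + normOn m (n+1) (fun s => Dhat m νp νn x₁ s - Dhat m νp νn x₂ s)) with hfdef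
    have hsumf : Summable f := summable_coterm _ (fun n => normOn_nonneg _ _)
    have hterm_bound : ∀ n : ℕ, n < N → f n ≤ η := by
      intro n hn
      have hb0 : 0 ≤ normOn m (n+1) (fun s => Dhat m νp νn x₁ s - Dhat m νp νn x₂ s) :=
        normOn_nonneg _ _
      have hbη : normOn m (n+1) (fun s => Dhat m νp νn x₁ s - Dhat m νp νn x₂ s) ≤ η := by
        apply normOn_le
        intro s hs
        have hsle : s ≤ 0 := hs.2
        show ‖Dhat m νp νn x₁ s - Dhat m νp νn x₂ s‖ ≤ η
        rw [Dhat_sub_apply hν hx₁ hx₂ hsle]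
        refine le_of_lt (hpt s ⟨?_, hs.2⟩)
        have hcast : ((n:ℝ) + 1) ≤ (N:ℝ) := by exact_mod_cast hn
        have := hs.1
        push_cast at this
        linarith
      exact (coterm_le_self hb0 n).trans hbη
    -- step 4 : sum up
    have hcd : coDist m (Dhat m νp νn x₁) (Dhat m νp νn x₂) = ∑' n, f n := hcd0
    have hsplit := Summable.sum_add_tsum_nat_add (f := f) N hsumf
    have hhead : ∑ i ∈ Finset.range N, f i ≤ (N:ℝ) * η := by
      calc ∑ i ∈ Finset.range N, f i ≤ ∑ i ∈ Finset.range N, η :=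
            Finset.sum_le_sum fun i hi => hterm_bound i (Finset.mem_range.1 hi)
        _ = (N:ℝ) * η := by rw [Finset.sum_const, Finset.card_range, nsmul_eq_mul]
    have htailsum : ∑' i : ℕ, f (i + N) ≤ (1/2:ℝ)^N := by
      have hsu : Summable (fun i : ℕ => (1/2:ℝ)^(i + N + 1)) :=
        (summable_nat_add_iff (f := fun n : ℕ => (1/2:ℝ)^(n+1)) N).2 summable_halfpow
      calc ∑' i : ℕ, f (i + N) ≤ ∑' i : ℕ, (1/2:ℝ)^(i + N + 1) :=
            Summable.tsum_le_tsum (fun i => coterm_le_pow (normOn_nonneg _ _) (i + N))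
              ((summable_nat_add_iff (f := f) N).2 hsumf) hsu
        _ = (1/2:ℝ)^N := tsum_halfpow_shift N
    have hNη : (N:ℝ) * η < ε / 2 := by
      rw [hηdef, mul_div_assoc', div_lt_div_iff₀ (by positivity) (by norm_num)]
      have hN0 : (0:ℝ) ≤ (N:ℝ) := Nat.cast_nonneg N
      nlinarith
    calc coDist m (Dhat m νp νn x₁) (Dhat m νp νn x₂) = ∑' n, f n := hcd
      _ = ∑ i ∈ Finset.range N, f i + ∑' i : ℕ, f (i + N) := hsplit.symm
      _ ≤ (N:ℝ) * η + (1/2:ℝ)^N := add_le_add hhead htailsum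
      _ < ε / 2 + ε / 2 := add_lt_add hNη hN
      _ = ε := by ring
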